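/- Let A be an LM_θ-algebra with dual space (X(A),{f_i^A}_{i∈I}). Then the Boolean lattice of all closed, open and modal subsets of X(A) is isomorphic to the lattice of all Boolean LM_θ-congruences on A, via the map G ↦ Θ_OM(G) = {(a,b) ∈ A×A : σ_A(a) △ σ_A(b) ⊆ G}. -/

import Mathlib

/-- An LM_θ-algebra over a linearly ordered index set `I`:
a bounded distributive lattice with operations `phi i` and `phibar i`. -/
structure LMAlg (I A : Type*) [LinearOrder I] [DistribLattice A] [BoundedOrder A] where
  phi : I → A → A
  phibar : I → A → A
  phi_sup : ∀ i x y, phi i (x ⊔ y) = phi i x ⊔ phi i y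
  phi_inf : ∀ i x y, phi i (x ⊓ y) = phi i x ⊓ phi i y
  phi_bot : ∀ i, phi i ⊥ = ⊥
  phi_top : ∀ i, phi i ⊤ = ⊤
  sup_phibar : ∀ i x, phi i x ⊔ phibar i x = ⊤
  inf_phibar : ∀ i x, phi i x ⊓ phibar i x = ⊥
  phi_phi : ∀ i j x, phi i (phi j x) = phi j x
  phi_mono : ∀ ⦃i j : I⦄, i ≤ j → ∀ x, phi i x ≤ phi j x
  determined : ∀ x y, (∀ i, phi i x = phi i y) → x = y

/-- A prime filter of a bounded distributive lattice. -/
structure PrimeFilter (A : Type*) [DistribLattice A] [BoundedOrder A] where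
  carrier : Set A
  top_mem : ⊤ ∈ carrier
  bot_notMem : ⊥ ∉ carrier
  mem_of_le : ∀ {a b : A}, a ∈ carrier → a ≤ b → b ∈ carrier
  inf_mem : ∀ {a b : A}, a ∈ carrier → b ∈ carrier → a ⊓ b ∈ carrier
  prime : ∀ {a b : A}, a ⊔ b ∈ carrier → a ∈ carrier ∨ b ∈ carrier

variable {I A : Type*} [LinearOrder I] [DistribLattice A] [BoundedOrder A]

/-- Prime filters ordered by inclusion. -/
instance : PartialOrder (PrimeFilter A) where
  le P Q := P.carrier ⊆ Q.carrier
  le_refl _ _ hx := hx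
  le_trans _ _ _ h1 h2 _ hx := h2 (h1 hx)
  le_antisymm P Q h1 h2 := by
    cases P; cases Q
    simp only [PrimeFilter.mk.injEq]
    exact subset_antisymm h1 h2

/-- The map `σ_A`. -/
def sigmaA (a : A) : Set (PrimeFilter A) := {P | a ∈ P.carrier}

/-- The Priestley topology on the set of prime filters, with sub-basis the sets
`σ_A a` and their complements. -/
instance : TopologicalSpace (PrimeFilter A) :=
  TopologicalSpace.generateFrom
    (Set.range (sigmaA (A := A)) ∪ Set.range (fun a : A => (sigmaA a)ᶜ))

/-- The map `f_i^A (P) = φ_i⁻¹(P)` on prime filters. -/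
def LMAlg.fA (L : LMAlg I A) (i : I) (P : PrimeFilter A) : PrimeFilter A where
  carrier := L.phi i ⁻¹' P.carrier
  top_mem := by simp only [Set.mem_preimage, L.phi_top]; exact P.top_mem
  bot_notMem := by simp only [Set.mem_preimage, L.phi_bot]; exact P.bot_notMem
  mem_of_le := by
    intro a b ha hab
    have h1 : L.phi i b = L.phi i a ⊔ L.phi i b := by
      rw [← L.phi_sup, sup_eq_right.mpr hab]
    exact P.mem_of_le ha (le_sup_left.trans_eq h1.symm)
  inf_mem := by
    intro a b ha hb
    simp only [Set.mem_preimage, L.phi_inf]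
    exact P.inf_mem ha hb
  prime := by
    intro a b h
    simp only [Set.mem_preimage, L.phi_sup] at h
    exact P.prime h

/-- An LM_θ-congruence: a bounded-lattice congruence compatible with all `phi i`, `phibar i`. -/
structure IsLMCongr (L : LMAlg I A) (r : A → A → Prop) : Prop where
  refl : ∀ x, r x x
  symm : ∀ {x y}, r x y → r y x
  trans : ∀ {x y z}, r x y → r y z → r x z
  sup_congr : ∀ {x y u v}, r x y → r u v → r (x ⊔ u) (y ⊔ v)
  inf_congr : ∀ {x y u v}, r x y → r u v → r (x ⊓ u) (y ⊓ v)
  phi_congr : ∀ (i : I) {x y}, r x y → r (L.phi i x) (L.phi i y)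
  phibar_congr : ∀ (i : I) {x y}, r x y → r (L.phibar i x) (L.phibar i y)

/-- A θ-congruence: a lattice congruence `r` with `r x y ↔ ∀ i, r (φ_i x) (φ_i y)`. -/
structure IsThetaCongr (L : LMAlg I A) (r : A → A → Prop) : Prop where
  refl : ∀ x, r x x
  symm : ∀ {x y}, r x y → r y x
  trans : ∀ {x y z}, r x y → r y z → r x z
  sup_congr : ∀ {x y u v}, r x y → r u v → r (x ⊔ u) (y ⊔ v)
  inf_congr : ∀ {x y u v}, r x y → r u v → r (x ⊓ u) (y ⊓ v)
  theta : ∀ x y, r x y ↔ ∀ i : I, r (L.phi i x) (L.phi i y)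

/-- `Y` is semimodal if `f i '' Y ⊆ Y` for all `i`. -/
def Semimodal {I X : Type*} (f : I → X → X) (Y : Set X) : Prop := ∀ i, f i '' Y ⊆ Y

/-- `Y` is modal if `f i ⁻¹' Y = Y` for all `i`. -/
def Modal {I X : Type*} (f : I → X → X) (Y : Set X) : Prop := ∀ i, f i ⁻¹' Y = Y

/-- `Y` is a θ-subset if `⋃ i, f i '' Y ⊆ Y ⊆ closure (⋃ i, f i '' Y)`. -/
def ThetaSubset {I X : Type*} [TopologicalSpace X] (f : I → X → X) (Y : Set X) : Prop :=
  (⋃ i, f i '' Y) ⊆ Y ∧ Y ⊆ closure (⋃ i, f i '' Y)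

/-- The relation `Θ` determined by an (open) subset `G` of the dual space:
`(a,b) ∈ Θ(G)` iff `σ_A a △ σ_A b ⊆ G`. -/
def thetaO (G : Set (PrimeFilter A)) : A → A → Prop :=
  fun a b => symmDiff (sigmaA a) (sigmaA b) ⊆ G

/-- `r` is the principal LM_θ-congruence generated by `(a,b)`. -/
def IsPrincipalLMCongrOn (L : LMAlg I A) (r : A → A → Prop) (a b : A) : Prop :=
  IsLMCongr L r ∧ r a b ∧ ∀ s, IsLMCongr L s → s a b → ∀ x y, r x y → s x y

/-- `r` is the principal θ-congruence generated by `(a,b)`. -/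
def IsPrincipalThetaCongrOn (L : LMAlg I A) (r : A → A → Prop) (a b : A) : Prop :=
  IsThetaCongr L r ∧ r a b ∧ ∀ s, IsThetaCongr L s → s a b → ∀ x y, r x y → s x y

/-- `r` is a principal LM_θ-congruence. -/
def IsPrincipalLMCongr (L : LMAlg I A) (r : A → A → Prop) : Prop :=
  ∃ a b, IsPrincipalLMCongrOn L r a b

/-- `r` is a principal θ-congruence. -/
def IsPrincipalThetaCongr (L : LMAlg I A) (r : A → A → Prop) : Prop :=
  ∃ a b, IsPrincipalThetaCongrOn L r a b

/-- `r` is a Boolean LM_θ-congruence: a complemented element of the lattice of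
LM_θ-congruences ordered by inclusion (the bottom element is equality and the
join of `r` and its complement, i.e. the least congruence containing both, is
the total relation). -/
def IsBooleanLMCongr (L : LMAlg I A) (r : A → A → Prop) : Prop :=
  IsLMCongr L r ∧ ∃ s, IsLMCongr L s ∧
    (∀ x y, (r x y ∧ s x y) ↔ x = y) ∧
    (∀ t, IsLMCongr L t → (∀ x y, r x y → t x y) → (∀ x y, s x y → t x y) → ∀ x y, t x y)



/-! ### Auxiliary development -/

namespace Stmt15Aux

open Set TopologicalSpace

section Basic

variable {A : Type*} [DistribLattice A] [BoundedOrder A]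

theorem mem_sigmaA {a : A} {P : PrimeFilter A} : P ∈ sigmaA a ↔ a ∈ P.carrier := Iff.rfl

theorem sigmaA_bot : sigmaA (⊥ : A) = (∅ : Set (PrimeFilter A)) :=
  Set.eq_empty_iff_forall_notMem.2 fun P hP => P.bot_notMem hP

theorem sigmaA_top : sigmaA (⊤ : A) = (Set.univ : Set (PrimeFilter A)) :=
  Set.eq_univ_of_forall fun P => P.top_mem

theorem sigmaA_mono {a b : A} (h : a ≤ b) : sigmaA a ⊆ sigmaA (A := A) b :=
  fun P hP => P.mem_of_le hP h

theorem sigmaA_sup (a b : A) : sigmaA (a ⊔ b) = sigmaA a ∪ sigmaA (A := A) b := by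
  ext P
  constructor
  · exact fun h => P.prime h
  · rintro (h | h)
    · exact P.mem_of_le h le_sup_left
    · exact P.mem_of_le h le_sup_right

theorem sigmaA_inf (a b : A) : sigmaA (a ⊓ b) = sigmaA a ∩ sigmaA (A := A) b := by
  ext P
  exact ⟨fun h => ⟨P.mem_of_le h inf_le_left, P.mem_of_le h inf_le_right⟩,
    fun h => P.inf_mem h.1 h.2⟩

theorem exists_primeFilter {a b : A} (h : ¬ a ≤ b) :
    ∃ P : PrimeFilter A, a ∈ P.carrier ∧ b ∉ P.carrier := by
  obtain ⟨J, hJp, hJb, hdisj⟩ := DistribLattice.prime_ideal_of_disjoint_filter_ideal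
    (F := Order.PFilter.principal a) (I := Order.Ideal.principal b)
    (by
      rw [Set.disjoint_left]
      intro x hx hx'
      exact h (le_trans (Order.PFilter.mem_principal.1 hx) (Order.Ideal.mem_principal.1 hx')))
  have hbJ : b ∈ J := hJb Order.Ideal.mem_principal_self
  have haJ : a ∉ J := by
    exact Set.disjoint_left.1 hdisj (Order.PFilter.mem_principal.2 le_rfl)
  refine ⟨⟨{x | x ∉ J}, ?_, ?_, ?_, ?_, ?_⟩, haJ, fun hb => hb hbJ⟩
  · exact hJp.toIsProper.top_notMem
  · simp only [Set.mem_setOf_eq, not_not]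
    exact J.bot_mem
  · intro x y hx hxy hy
    exact hx (J.lower hxy hy)
  · intro x y hx hy hxy
    rcases hJp.mem_or_mem hxy with h' | h'
    · exact hx h'
    · exact hy h'
  · intro x y hxy
    by_contra hc
    push_neg at hc
    simp only [Set.mem_setOf_eq, not_not] at hc
    exact hxy (Order.Ideal.sup_mem hc.1 hc.2)

theorem sigmaA_subset_iff {a b : A} : sigmaA (A := A) a ⊆ sigmaA b ↔ a ≤ b := by
  refine ⟨fun hs => ?_, sigmaA_mono⟩
  by_contra h
  obtain ⟨P, haP, hbP⟩ := exists_primeFilter h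
  exact hbP (hs haP)

theorem sigmaA_injective : Function.Injective (sigmaA (A := A)) := fun a b h =>
  le_antisymm (sigmaA_subset_iff.1 h.le) (sigmaA_subset_iff.1 h.ge)

theorem sigma_symmDiff (a b : A) :
    symmDiff (sigmaA a) (sigmaA b) = sigmaA (a ⊔ b) \ sigmaA (A := A) (a ⊓ b) := by
  rw [sigmaA_sup, sigmaA_inf]
  ext P
  simp only [Set.mem_symmDiff, Set.mem_diff, Set.mem_union, Set.mem_inter_iff]
  tauto

theorem sigma_symmDiff_inf (a b : A) :
    symmDiff (sigmaA a) (sigmaA (a ⊓ b)) = sigmaA a \ sigmaA (A := A) b := by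
  rw [sigmaA_inf]
  ext P
  simp only [Set.mem_symmDiff, Set.mem_diff, Set.mem_inter_iff]
  tauto

theorem isOpen_sigmaA (a : A) : IsOpen (sigmaA a) :=
  isOpen_generateFrom_of_mem (Or.inl ⟨a, rfl⟩)

theorem isOpen_compl_sigmaA (a : A) : IsOpen (sigmaA (A := A) a)ᶜ :=
  isOpen_generateFrom_of_mem (Or.inr ⟨a, rfl⟩)

theorem isClosed_sigmaA (a : A) : IsClosed (sigmaA (A := A) a) :=
  ⟨isOpen_compl_sigmaA a⟩

end Basic

section Compact

variable {A : Type*} [DistribLattice A] [BoundedOrder A]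

theorem boolSet_clopen (A : Type*) (x : A) :
    IsOpen {g : A → Bool | g x = true} ∧ IsClosed {g : A → Bool | g x = true} := by
  have h : {g : A → Bool | g x = true} = (fun g : A → Bool => g x) ⁻¹' ({true} : Set Bool) := rfl
  rw [h]
  exact ⟨(continuous_apply x).isOpen_preimage _ (isOpen_discrete _),
    IsClosed.preimage (continuous_apply x) (isClosed_discrete _)⟩

/-- Encoding of a prime filter as its characteristic function. -/
noncomputable def enc : PrimeFilter A → (A → Bool) :=
  fun P a => @decide (a ∈ P.carrier) (Classical.propDecidable _)

theorem enc_eq_true {P : PrimeFilter A} {a : A} : enc P a = true ↔ a ∈ P.carrier := by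
  simp [enc]

theorem enc_preimage_true (a : A) :
    enc ⁻¹' {g : A → Bool | g a = true} = sigmaA (A := A) a :=
  Set.ext fun _ => enc_eq_true

theorem continuous_enc : Continuous (enc (A := A)) := by
  refine continuous_pi fun a => ?_
  rw [continuous_discrete_rng]
  intro b
  cases b
  · have h : (fun P : PrimeFilter A => enc P a) ⁻¹' ({false} : Set Bool) = (sigmaA a)ᶜ := by
      ext P
      simp only [Set.mem_preimage, Set.mem_singleton_iff, Set.mem_compl_iff, ← Bool.not_eq_true,
        enc_eq_true]
      rfl
    rw [h]
    exact isOpen_compl_sigmaA a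
  · have h : (fun P : PrimeFilter A => enc P a) ⁻¹' ({true} : Set Bool) = sigmaA a := by
      ext P
      simp only [Set.mem_preimage, Set.mem_singleton_iff, enc_eq_true]
      rfl
    rw [h]
    exact isOpen_sigmaA a

theorem enc_injective : Function.Injective (enc (A := A)) := by
  intro P Q h
  have hc : P.carrier = Q.carrier := by
    ext a
    rw [← enc_eq_true, ← enc_eq_true, congrFun h a]
  exact le_antisymm (fun x hx => hc ▸ hx) (fun x hx => hc.symm ▸ hx)

theorem topology_eq :
    (inferInstance : TopologicalSpace (PrimeFilter A)) =
      TopologicalSpace.induced (enc (A := A)) Pi.topologicalSpace := by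
  refine le_antisymm (continuous_iff_le_induced.1 continuous_enc) ?_
  refine le_generateFrom_iff_subset_isOpen.2 ?_
  rintro s (⟨a, rfl⟩ | ⟨a, rfl⟩)
  · exact isOpen_induced_iff.2 ⟨{g | g a = true}, (boolSet_clopen A a).1, enc_preimage_true a⟩
  · refine isOpen_induced_iff.2 ⟨{g | g a = true}ᶜ, (boolSet_clopen A a).2.isOpen_compl, ?_⟩
    rw [Set.preimage_compl, enc_preimage_true]

theorem isClosed_range_enc : IsClosed (Set.range (enc (A := A))) := by
  have hT := boolSet_clopen A
  have hrange : Set.range (enc (A := A)) =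
      ({g : A → Bool | g ⊤ = true} ∩ {g : A → Bool | g ⊥ = true}ᶜ) ∩
      ((⋂ (a : A) (b : A) (_ : a ≤ b), {g : A → Bool | g a = true}ᶜ ∪ {g | g b = true}) ∩
       (⋂ (a : A) (b : A),
          ({g : A → Bool | g a = true}ᶜ ∪ {g | g b = true}ᶜ) ∪ {g | g (a ⊓ b) = true}) ∩
       (⋂ (a : A) (b : A),
          {g : A → Bool | g (a ⊔ b) = true}ᶜ ∪ ({g | g a = true} ∪ {g | g b = true}))) := by
    ext g
    simp only [Set.mem_range, Set.mem_inter_iff, Set.mem_compl_iff, Set.mem_iInter,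
      Set.mem_union, Set.mem_setOf_eq]
    constructor
    · rintro ⟨P, rfl⟩
      refine ⟨⟨enc_eq_true.2 P.top_mem, fun h => P.bot_notMem (enc_eq_true.1 h)⟩,
        ⟨?_, ?_⟩, ?_⟩
      · intro a b hab
        by_cases ha : a ∈ P.carrier
        · exact Or.inr (enc_eq_true.2 (P.mem_of_le ha hab))
        · exact Or.inl fun h => ha (enc_eq_true.1 h)
      · intro a b
        by_cases ha : a ∈ P.carrier
        · by_cases hb : b ∈ P.carrier
          · exact Or.inr (enc_eq_true.2 (P.inf_mem ha hb))
          · exact Or.inl (Or.inr fun h => hb (enc_eq_true.1 h))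
        · exact Or.inl (Or.inl fun h => ha (enc_eq_true.1 h))
      · intro a b
        by_cases hab : a ⊔ b ∈ P.carrier
        · rcases P.prime hab with h | h
          · exact Or.inr (Or.inl (enc_eq_true.2 h))
          · exact Or.inr (Or.inr (enc_eq_true.2 h))
        · exact Or.inl fun h => hab (enc_eq_true.1 h)
    · rintro ⟨⟨htop, hbot⟩, ⟨hle, hinf⟩, hsup⟩
      refine ⟨⟨{a | g a = true}, htop, hbot, ?_, ?_, ?_⟩, ?_⟩
      · intro a b ha hab
        rcases hle a b hab with h | h
        · exact absurd ha h
        · exact h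
      · intro a b ha hb
        rcases hinf a b with (h | h) | h
        · exact absurd ha h
        · exact absurd hb h
        · exact h
      · intro a b hab
        rcases hsup a b with h | h
        · exact absurd hab h
        · exact h
      · funext a
        by_cases h : g a = true
        · simp [enc, h]
        · simp only [Bool.not_eq_true] at h
          simp [enc, h]
  rw [hrange]
  refine IsClosed.inter (IsClosed.inter (hT ⊤).2 (hT ⊥).1.isClosed_compl) ?_
  refine IsClosed.inter (IsClosed.inter ?_ ?_) ?_
  · exact isClosed_iInter fun a => isClosed_iInter fun b => isClosed_iInter fun _ =>
      ((hT a).1.isClosed_compl).union (hT b).2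
  · exact isClosed_iInter fun a => isClosed_iInter fun b =>
      (((hT a).1.isClosed_compl).union ((hT b).1.isClosed_compl)).union (hT (a ⊓ b)).2
  · exact isClosed_iInter fun a => isClosed_iInter fun b =>
      ((hT (a ⊔ b)).1.isClosed_compl).union ((hT a).2.union (hT b).2)

instance : CompactSpace (PrimeFilter A) := by
  have h : Topology.IsClosedEmbedding (enc (A := A)) :=
    ⟨⟨⟨topology_eq⟩, enc_injective⟩, isClosed_range_enc⟩
  exact h.compactSpace

theorem exists_basic_subset {G : Set (PrimeFilter A)} (hG : IsOpen G) {P : PrimeFilter A}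
    (hP : P ∈ G) : ∃ a b : A, P ∈ sigmaA a \ sigmaA b ∧ sigmaA a \ sigmaA b ⊆ G := by
  set S : Set (Set (PrimeFilter A)) :=
    Set.range (sigmaA (A := A)) ∪ Set.range (fun a : A => (sigmaA a)ᶜ) with hS
  have hb := isTopologicalBasis_of_subbasis (α := PrimeFilter A) (s := S) rfl
  obtain ⟨v, ⟨f, ⟨hfin, hfsub⟩, rfl⟩, hPv, hvG⟩ := hb.exists_subset_of_mem_open hP hG
  have hrep : ∀ f : Set (Set (PrimeFilter A)), f.Finite → f ⊆ S →
      ∃ x y : A, ⋂₀ f = sigmaA x \ sigmaA y := by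
    intro f hfin
    refine Set.Finite.induction_on
      (motive := fun f _ => f ⊆ S → ∃ x y : A, ⋂₀ f = sigmaA x \ sigmaA (A := A) y) f hfin ?_ ?_
    · intro _
      refine ⟨⊤, ⊥, ?_⟩
      rw [Set.sInter_empty, sigmaA_top, sigmaA_bot, Set.diff_empty]
    · intro s f' _ _ ih hsub
      obtain ⟨x, y, hxy⟩ := ih (fun u hu => hsub (Set.mem_insert_of_mem _ hu))
      have hs : s ∈ S := hsub (Set.mem_insert _ _)
      rw [Set.sInter_insert, hxy]
      rcases hs with ⟨c, rfl⟩ | ⟨c, rfl⟩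
      · refine ⟨c ⊓ x, y, ?_⟩
        rw [sigmaA_inf]
        ext Q
        simp only [Set.mem_inter_iff, Set.mem_diff]
        tauto
      · refine ⟨x, y ⊔ c, ?_⟩
        rw [sigmaA_sup]
        ext Q
        simp only [Set.mem_inter_iff, Set.mem_diff, Set.mem_union, Set.mem_compl_iff]
        tauto
  obtain ⟨x, y, hxy⟩ := hrep f hfin hfsub
  exact ⟨x, y, hxy ▸ hPv, hxy ▸ hvG⟩

end Compact


section Chain

variable {A : Type*} [DistribLattice A] [BoundedOrder A]

theorem mem_sigmaA_finsetSup {α : Type*} (t : Finset α) (g : α → A) (P : PrimeFilter A) :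
    P ∈ sigmaA (t.sup g) ↔ ∃ x ∈ t, P ∈ sigmaA (g x) := by
  classical
  induction t using Finset.induction_on with
  | empty =>
    rw [Finset.sup_empty]
    constructor
    · intro h
      exact absurd (mem_sigmaA.1 h) P.bot_notMem
    · rintro ⟨x, hx, _⟩
      exact absurd hx (Finset.notMem_empty x)
  | insert a t hni ih =>
    rw [Finset.sup_insert]
    have : P ∈ sigmaA (g a ⊔ t.sup g) ↔ P ∈ sigmaA (g a) ∪ sigmaA (t.sup g) := by
      rw [sigmaA_sup]
    rw [this]
    simp only [Set.mem_union, ih, Finset.mem_insert]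
    constructor
    · rintro (h | ⟨x, hx, hPx⟩)
      · exact ⟨a, Or.inl rfl, h⟩
      · exact ⟨x, Or.inr hx, hPx⟩
    · rintro ⟨x, (rfl | hx), hPx⟩
      · exact Or.inl hPx
      · exact Or.inr ⟨x, hx, hPx⟩

theorem mem_sigmaA_finsetInf (s : Finset A) (P : PrimeFilter A) :
    P ∈ sigmaA (s.inf id) ↔ ∀ f ∈ s, f ∈ P.carrier := by
  classical
  induction s using Finset.induction_on with
  | empty =>
    simp only [Finset.inf_empty, Finset.notMem_empty, false_implies, implies_true, iff_true]
    exact P.top_mem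
  | insert a t hni ih =>
    rw [Finset.inf_insert]
    have : P ∈ sigmaA (id a ⊓ t.inf id) ↔ P ∈ sigmaA (id a) ∩ sigmaA (t.inf id) := by
      rw [sigmaA_inf]
    rw [this]
    simp only [Set.mem_inter_iff, ih, id_eq, Finset.mem_insert]
    constructor
    · rintro ⟨h1, h2⟩ f (rfl | hf)
      · exact h1
      · exact h2 f hf
    · intro h
      exact ⟨h a (Or.inl rfl), fun f hf => h f (Or.inr hf)⟩

/-- The key finite chain lemma: if a reflexive transitive relation `c` relates any
`u ≤ v` whose `σ`-interval lies inside `σ z \ σ w` and inside a single `F`-class,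
then `c w z`. -/
theorem chain_lemma (c : A → A → Prop) (crefl : ∀ x, c x x)
    (ctrans : ∀ {x y z}, c x y → c y z → c x z)
    (F : Finset A) (w z : A) (hwz : w ≤ z)
    (H : ∀ u v : A, u ≤ v → sigmaA v \ sigmaA u ⊆ sigmaA z \ sigmaA w →
      (∀ P Q : PrimeFilter A, P ∈ sigmaA v \ sigmaA u → Q ∈ sigmaA v \ sigmaA u →
        ∀ f ∈ F, (f ∈ P.carrier ↔ f ∈ Q.carrier)) → c u v) :
    c w z := by
  classical
  set Smem : PrimeFilter A → Finset A := fun P => F.filter (fun f => f ∈ P.carrier) with hSmem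
  set d : Finset (Finset A) → A := fun U => w ⊔ U.sup (fun s => s.inf id ⊓ z) with hd
  have mem_d : ∀ U : Finset (Finset A), (∀ s ∈ U, s ⊆ F) →
      (∀ s ∈ U, ∀ P : PrimeFilter A, z ∈ P.carrier → w ∉ P.carrier → s ⊆ Smem P → Smem P ∈ U) →
      ∀ P : PrimeFilter A,
        (P ∈ sigmaA (d U) ↔ w ∈ P.carrier ∨ (z ∈ P.carrier ∧ Smem P ∈ U)) := by
    intro U hsub hUP P
    have h1 : P ∈ sigmaA (d U) ↔
        w ∈ P.carrier ∨ P ∈ sigmaA (U.sup (fun s => s.inf id ⊓ z)) := by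
      have : sigmaA (d U) = sigmaA w ∪ sigmaA (U.sup (fun s => s.inf id ⊓ z)) := by
        rw [hd, sigmaA_sup]
      rw [this]; rfl
    rw [h1, mem_sigmaA_finsetSup]
    constructor
    · rintro (hw | ⟨s, hsU, hPs⟩)
      · exact Or.inl hw
      · have hPs' : P ∈ sigmaA (s.inf id) ∩ sigmaA z := by
          rw [← sigmaA_inf]; exact hPs
        have hz : z ∈ P.carrier := hPs'.2
        by_cases hw : w ∈ P.carrier
        · exact Or.inl hw
        · refine Or.inr ⟨hz, hUP s hsU P hz hw ?_⟩
          intro f hf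
          rw [hSmem, Finset.mem_filter]
          exact ⟨hsub s hsU hf, (mem_sigmaA_finsetInf s P).1 hPs'.1 f hf⟩
    · rintro (hw | ⟨hz, hmem⟩)
      · exact Or.inl hw
      · refine Or.inr ⟨Smem P, hmem, ?_⟩
        have : P ∈ sigmaA ((Smem P).inf id) :=
          (mem_sigmaA_finsetInf _ P).2 fun f hf => (Finset.mem_filter.1 hf).2
        rw [sigmaA_inf]
        exact ⟨this, hz⟩
  have key : ∀ n (U : Finset (Finset A)), U.card = n → (∀ s ∈ U, s ⊆ F) →
      (∀ s ∈ U, ∀ P : PrimeFilter A, z ∈ P.carrier → w ∉ P.carrier → s ⊆ Smem P → Smem P ∈ U) →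
      c w (d U) := by
    intro n
    induction n using Nat.strong_induction_on with
    | _ n ih =>
      intro U hcard hsub hUP
      rcases Finset.eq_empty_or_nonempty U with rfl | hne
      · have : d ∅ = w := by rw [hd]; simp
        rw [this]; exact crefl w
      · obtain ⟨s0, hs0U, hmin⟩ := Finset.exists_min_image U Finset.card hne
        set U' := U.erase s0 with hU'
        have hsubU' : U' ⊆ U := Finset.erase_subset _ _
        have hsub' : ∀ s ∈ U', s ⊆ F := fun s hs => hsub s (hsubU' hs)
        have hUP' : ∀ s ∈ U', ∀ P : PrimeFilter A, z ∈ P.carrier → w ∉ P.carrier →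
            s ⊆ Smem P → Smem P ∈ U' := by
          intro s hs P hz hw hsP
          have hmemU : Smem P ∈ U := hUP s (hsubU' hs) P hz hw hsP
          rw [hU', Finset.mem_erase]
          refine ⟨?_, hmemU⟩
          intro heq
          have hss0 : s ⊆ s0 := heq ▸ hsP
          have : s = s0 := Finset.eq_of_subset_of_card_le hss0
            (hmin s (hsubU' hs))
          exact (Finset.mem_erase.1 hs).1 this
        have hcard' : U'.card < n := by
          rw [← hcard, hU']
          exact Finset.card_erase_lt_of_mem hs0U
        have ihc : c w (d U') := ih _ hcard' U' rfl hsub' hUP'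
        have hle : d U' ≤ d U := by
          rw [hd]
          exact sup_le_sup_left (Finset.sup_mono hsubU') w
        have hmemd := mem_d U hsub hUP
        have hmemd' := mem_d U' hsub' hUP'
        have hdiff : ∀ P : PrimeFilter A, P ∈ sigmaA (d U) \ sigmaA (d U') →
            z ∈ P.carrier ∧ w ∉ P.carrier ∧ Smem P = s0 := by
          intro P ⟨hPU, hPU'⟩
          have h1 := (hmemd P).1 hPU
          have h2 := fun h => hPU' ((hmemd' P).2 h)
          have hw : w ∉ P.carrier := fun hw => h2 (Or.inl hw)
          rcases h1 with hw' | ⟨hz, hmem⟩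
          · exact absurd hw' hw
          · refine ⟨hz, hw, ?_⟩
            by_contra hne'
            exact h2 (Or.inr ⟨hz, Finset.mem_erase.2 ⟨hne', hmem⟩⟩)
        have hstep : c (d U') (d U) := by
          refine H _ _ hle ?_ ?_
          · intro P hP
            obtain ⟨hz, hw, _⟩ := hdiff P hP
            exact ⟨hz, hw⟩
          · intro P Q hP hQ f hf
            obtain ⟨_, _, hPs⟩ := hdiff P hP
            obtain ⟨_, _, hQs⟩ := hdiff Q hQ
            constructor
            · intro hfP
              have : f ∈ Smem P := Finset.mem_filter.2 ⟨hf, hfP⟩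
              rw [hPs, ← hQs] at this
              exact (Finset.mem_filter.1 this).2
            · intro hfQ
              have : f ∈ Smem Q := Finset.mem_filter.2 ⟨hf, hfQ⟩
              rw [hQs, ← hPs] at this
              exact (Finset.mem_filter.1 this).2
        exact ctrans ihc hstep
  set Ufull : Finset (Finset A) := F.powerset.filter
    (fun s => ∃ P : PrimeFilter A, z ∈ P.carrier ∧ w ∉ P.carrier ∧ Smem P = s) with hUfull
  have hsubfull : ∀ s ∈ Ufull, s ⊆ F := fun s hs =>
    Finset.mem_powerset.1 (Finset.mem_filter.1 hs).1
  have hUPfull : ∀ s ∈ Ufull, ∀ P : PrimeFilter A, z ∈ P.carrier → w ∉ P.carrier →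
      s ⊆ Smem P → Smem P ∈ Ufull := by
    intro s _ P hz hw _
    rw [hUfull, Finset.mem_filter]
    exact ⟨Finset.mem_powerset.2 (Finset.filter_subset _ _), P, hz, hw, rfl⟩
  have hfin : c w (d Ufull) := key _ Ufull rfl hsubfull hUPfull
  have : d Ufull = z := by
    apply sigmaA_injective
    ext P
    rw [mem_d Ufull hsubfull hUPfull P]
    constructor
    · rintro (hw | ⟨hz, _⟩)
      · exact P.mem_of_le hw hwz
      · exact hz
    · intro hz
      by_cases hw : w ∈ P.carrier
      · exact Or.inl hw
      · refine Or.inr ⟨hz, ?_⟩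
        rw [hUfull, Finset.mem_filter]
        exact ⟨Finset.mem_powerset.2 (Finset.filter_subset _ _), P, hz, hw, rfl⟩
  rwa [this] at hfin

/-- If the `σ`-interval of `u ≤ v` is contained in that of `x ≤ y` and a lattice
congruence relates `x` and `y`, it relates `u` and `v`. -/
theorem congr_of_sigma_subset {c : A → A → Prop}
    (crefl : ∀ x, c x x)
    (csup : ∀ {x y u v}, c x y → c u v → c (x ⊔ u) (y ⊔ v))
    (cinf : ∀ {x y u v}, c x y → c u v → c (x ⊓ u) (y ⊓ v))
    {x y u v : A} (huv : u ≤ v)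
    (hsub : sigmaA v \ sigmaA u ⊆ sigmaA y \ sigmaA x) (hc : c x y) : c u v := by
  have h1 : v ⊓ x ≤ u := by
    rw [← sigmaA_subset_iff, sigmaA_inf]
    rintro P ⟨hv, hx⟩
    by_contra hu
    exact (hsub ⟨hv, hu⟩).2 hx
  have h2 : v ≤ u ⊔ y := by
    rw [← sigmaA_subset_iff, sigmaA_sup]
    intro P hv
    by_cases hu : P ∈ sigmaA u
    · exact Or.inl hu
    · exact Or.inr (hsub ⟨hv, hu⟩).1
  have step : c (u ⊔ (v ⊓ x)) (u ⊔ (v ⊓ y)) := csup (crefl u) (cinf (crefl v) hc)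
  have e1 : u ⊔ (v ⊓ x) = u := sup_eq_left.2 h1
  have e2 : u ⊔ (v ⊓ y) = v := by
    apply le_antisymm (sup_le huv inf_le_left)
    calc v = v ⊓ (u ⊔ y) := (inf_eq_left.2 h2).symm
    _ = v ⊓ u ⊔ v ⊓ y := inf_sup_left v u y
    _ ≤ u ⊔ v ⊓ y := sup_le_sup_right inf_le_right _
  rw [e1, e2] at step
  exact step

end Chain


section LM

variable {I A : Type*} [LinearOrder I] [DistribLattice A] [BoundedOrder A]

theorem fA_preimage_sigmaA (L : LMAlg I A) (i : I) (a : A) :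
    L.fA i ⁻¹' sigmaA a = sigmaA (L.phi i a) := rfl

theorem sigmaA_phibar (L : LMAlg I A) (i : I) (x : A) :
    sigmaA (L.phibar i x) = (sigmaA (L.phi i x))ᶜ := by
  ext P
  simp only [Set.mem_compl_iff, mem_sigmaA]
  constructor
  · intro h hmem
    exact P.bot_notMem (L.inf_phibar i x ▸ P.inf_mem hmem h)
  · intro h
    have htop : L.phi i x ⊔ L.phibar i x ∈ P.carrier := by
      rw [L.sup_phibar i x]; exact P.top_mem
    rcases P.prime htop with h' | h'
    · exact absurd h' h
    · exact h'

theorem rel_inf_sup {L : LMAlg I A} {c : A → A → Prop} (hc : IsLMCongr L c) {a b : A}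
    (h : c a b) : c (a ⊓ b) (a ⊔ b) := by
  have h1 : c (a ⊓ b) b := by
    have := hc.inf_congr h (hc.refl b); rwa [inf_idem] at this
  have h2 : c (a ⊔ b) b := by
    have := hc.sup_congr h (hc.refl b); rwa [sup_idem] at this
  exact hc.trans h1 (hc.symm h2)

theorem rel_of_inf_sup {L : LMAlg I A} {c : A → A → Prop} (hc : IsLMCongr L c) {a b : A}
    (h : c (a ⊓ b) (a ⊔ b)) : c a b := by
  have h1 : c a (a ⊔ b) := by
    have := hc.sup_congr (hc.refl a) h
    rwa [sup_inf_self, ← sup_assoc, sup_idem] at this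
  have h2 : c b (a ⊔ b) := by
    have := hc.sup_congr (hc.refl b) h
    rwa [inf_comm a b, sup_inf_self, sup_comm b (a ⊔ b), sup_assoc, sup_idem] at this
  exact hc.trans h1 (hc.symm h2)

theorem thetaO_phi {L : LMAlg I A} {G : Set (PrimeFilter A)} (hmod : Modal L.fA G)
    (i : I) {x y : A} (h : thetaO G x y) : thetaO G (L.phi i x) (L.phi i y) := by
  have hpre : symmDiff (sigmaA (L.phi i x)) (sigmaA (L.phi i y)) =
      L.fA i ⁻¹' symmDiff (sigmaA x) (sigmaA y) := by
    ext P
    simp only [Set.mem_symmDiff, Set.mem_preimage]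
    rfl
  show symmDiff (sigmaA (L.phi i x)) (sigmaA (L.phi i y)) ⊆ G
  rw [hpre, ← hmod i]
  exact Set.preimage_mono h

theorem isLMCongr_thetaO (L : LMAlg I A) {G : Set (PrimeFilter A)} (hmod : Modal L.fA G) :
    IsLMCongr L (thetaO G) := by
  refine ⟨?_, ?_, ?_, ?_, ?_, fun i {x y} h => thetaO_phi hmod i h, ?_⟩
  · intro x
    show symmDiff (sigmaA x) (sigmaA x) ⊆ G
    rw [symmDiff_self]
    exact bot_le
  · intro x y h
    show symmDiff (sigmaA y) (sigmaA x) ⊆ G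
    rw [symmDiff_comm]
    exact h
  · intro x y z h1 h2
    intro P hP
    have h3 : P ∈ symmDiff (sigmaA x) (sigmaA y) ∪ symmDiff (sigmaA y) (sigmaA z) :=
      symmDiff_triangle (sigmaA x) (sigmaA y) (sigmaA z) hP
    rcases h3 with h | h
    · exact h1 h
    · exact h2 h
  · intro x y u v h1 h2
    intro P hP
    have hP' : P ∈ symmDiff (sigmaA x ∪ sigmaA u) (sigmaA y ∪ sigmaA v) := by
      rwa [← sigmaA_sup, ← sigmaA_sup]
    simp only [Set.mem_symmDiff, Set.mem_union] at hP'
    have : P ∈ symmDiff (sigmaA x) (sigmaA y) ∨ P ∈ symmDiff (sigmaA u) (sigmaA v) := by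
      simp only [Set.mem_symmDiff]
      tauto
    rcases this with h | h
    · exact h1 h
    · exact h2 h
  · intro x y u v h1 h2
    intro P hP
    have hP' : P ∈ symmDiff (sigmaA x ∩ sigmaA u) (sigmaA y ∩ sigmaA v) := by
      rwa [← sigmaA_inf, ← sigmaA_inf]
    simp only [Set.mem_symmDiff, Set.mem_inter_iff] at hP'
    have : P ∈ symmDiff (sigmaA x) (sigmaA y) ∨ P ∈ symmDiff (sigmaA u) (sigmaA v) := by
      simp only [Set.mem_symmDiff]
      tauto
    rcases this with h | h
    · exact h1 h
    · exact h2 h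
  · intro i x y h
    show symmDiff (sigmaA (L.phibar i x)) (sigmaA (L.phibar i y)) ⊆ G
    rw [sigmaA_phibar, sigmaA_phibar, compl_symmDiff_compl]
    exact thetaO_phi hmod i h

theorem isBoolean_thetaO (L : LMAlg I A) {G : Set (PrimeFilter A)}
    (hcl : IsClosed G) (hop : IsOpen G) (hmod : Modal L.fA G) :
    IsBooleanLMCongr L (thetaO G) := by
  classical
  have hmodc : Modal L.fA Gᶜ := fun i => by rw [Set.preimage_compl, hmod i]
  refine ⟨isLMCongr_thetaO L hmod, thetaO Gᶜ, isLMCongr_thetaO L hmodc, ?_, ?_⟩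
  · intro x y
    constructor
    · rintro ⟨h1, h2⟩
      apply sigmaA_injective
      rw [← symmDiff_eq_bot]
      exact le_bot_iff.1 fun P hP => ((h2 hP) (h1 hP)).elim
    · rintro rfl
      constructor <;>
        · show symmDiff (sigmaA _) (sigmaA _) ⊆ _
          rw [symmDiff_self]
          exact bot_le
  · intro t ht hrt hst x y
    suffices hbt : t ⊥ ⊤ by
      have hx : t x ⊤ := by
        have h := ht.sup_congr (ht.refl x) hbt
        rwa [sup_bot_eq, sup_top_eq] at h
      have hy : t y ⊤ := by
        have h := ht.sup_congr (ht.refl y) hbt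
        rwa [sup_bot_eq, sup_top_eq] at h
      exact ht.trans hx (ht.symm hy)
    have hcov : G ⊆ ⋃ i : {p : A × A // sigmaA p.1 \ sigmaA p.2 ⊆ G},
        (sigmaA i.1.1 \ sigmaA i.1.2) := by
      intro P hP
      obtain ⟨a, b, hPm, hsub⟩ := exists_basic_subset hop hP
      exact Set.mem_iUnion.2 ⟨⟨(a, b), hsub⟩, hPm⟩
    obtain ⟨fin, hfin⟩ := hcl.isCompact.elim_finite_subcover
      (fun i : {p : A × A // sigmaA p.1 \ sigmaA p.2 ⊆ G} => sigmaA i.1.1 \ sigmaA i.1.2)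
      (fun i => by
        show IsOpen (sigmaA i.1.1 \ sigmaA i.1.2)
        rw [Set.diff_eq]
        exact (isOpen_sigmaA _).inter (isOpen_compl_sigmaA _)) hcov
    set F : Finset A := fin.image (fun i => i.1.1) ∪ fin.image (fun i => i.1.2) with hF
    have hdet : ∀ P Q : PrimeFilter A, (∀ f ∈ F, (f ∈ P.carrier ↔ f ∈ Q.carrier)) →
        P ∈ G → Q ∈ G := by
      intro P Q hagree hP
      obtain ⟨i, hifin, hPi⟩ := Set.mem_iUnion₂.1 (hfin hP)
      have h1F : i.1.1 ∈ F := Finset.mem_union_left _ (Finset.mem_image_of_mem _ hifin)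
      have h2F : i.1.2 ∈ F := Finset.mem_union_right _ (Finset.mem_image_of_mem _ hifin)
      refine i.2 ⟨(hagree _ h1F).1 hPi.1, fun hc => hPi.2 ((hagree _ h2F).2 hc)⟩
    apply chain_lemma t ht.refl ht.trans F ⊥ ⊤ bot_le
    intro u v huv _ hclass
    rcases Set.eq_empty_or_nonempty (sigmaA v \ sigmaA u) with hemp | ⟨P0, hP0⟩
    · have huveq : u = v := sigmaA_injective
        (le_antisymm (sigmaA_mono huv) (Set.diff_eq_empty.1 hemp))
      exact huveq ▸ ht.refl u
    · by_cases hPG : P0 ∈ G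
      · have hsubG : sigmaA v \ sigmaA u ⊆ G := fun Q hQ =>
          hdet P0 Q (fun f hf => hclass P0 Q hP0 hQ f hf) hPG
        refine hrt _ _ ?_
        show symmDiff (sigmaA u) (sigmaA v) ⊆ G
        rw [symmDiff_of_le (sigmaA_mono huv)]
        exact hsubG
      · have hsubGc : sigmaA v \ sigmaA u ⊆ Gᶜ := fun Q hQ hQG =>
          hPG (hdet Q P0 (fun f hf => hclass Q P0 hQ hP0 f hf) hQG)
        refine hst _ _ ?_
        show symmDiff (sigmaA u) (sigmaA v) ⊆ Gᶜ
        rw [symmDiff_of_le (sigmaA_mono huv)]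
        exact hsubGc

/-- The open set associated with a congruence. -/
def GOf (r : A → A → Prop) : Set (PrimeFilter A) :=
  ⋃ p : {p : A × A // r p.1 p.2}, symmDiff (sigmaA p.1.1) (sigmaA p.1.2)

theorem subset_GOf {r : A → A → Prop} {a b : A} (h : r a b) :
    symmDiff (sigmaA a) (sigmaA b) ⊆ GOf r :=
  Set.subset_iUnion
    (fun p : {p : A × A // r p.1 p.2} => symmDiff (sigmaA p.1.1) (sigmaA p.1.2)) ⟨(a, b), h⟩

theorem isOpen_GOf (r : A → A → Prop) : IsOpen (GOf r) := by
  refine isOpen_iUnion fun p => ?_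
  rw [Set.symmDiff_def, Set.diff_eq, Set.diff_eq]
  exact ((isOpen_sigmaA _).inter (isOpen_compl_sigmaA _)).union
    ((isOpen_sigmaA _).inter (isOpen_compl_sigmaA _))

theorem GOf_inter_empty {L : LMAlg I A} {r s : A → A → Prop}
    (hrc : IsLMCongr L r) (hsc : IsLMCongr L s)
    (hmeet : ∀ x y, (r x y ∧ s x y) ↔ x = y) : GOf r ∩ GOf s = ∅ := by
  rw [Set.eq_empty_iff_forall_notMem]
  rintro P ⟨hPr, hPs⟩
  obtain ⟨⟨p, hp⟩, hmp⟩ := Set.mem_iUnion.1 hPr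
  obtain ⟨⟨q, hq⟩, hmq⟩ := Set.mem_iUnion.1 hPs
  set x := p.1 ⊓ p.2
  set y := p.1 ⊔ p.2
  set u := q.1 ⊓ q.2
  set v := q.1 ⊔ q.2
  have hrxy : r x y := rel_inf_sup hrc hp
  have hsuv : s u v := rel_inf_sup hsc hq
  have hPxy : P ∈ sigmaA y \ sigmaA x := sigma_symmDiff p.1 p.2 ▸ hmp
  have hPuv : P ∈ sigmaA v \ sigmaA u := sigma_symmDiff q.1 q.2 ▸ hmq
  set z1 := y ⊓ v
  have hrz : r ((x ⊔ u) ⊓ z1) z1 := by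
    have h1 : r (x ⊔ u) (y ⊔ u) := hrc.sup_congr hrxy (hrc.refl u)
    have h2 := hrc.inf_congr h1 (hrc.refl z1)
    have h3 : (y ⊔ u) ⊓ z1 = z1 := inf_eq_right.2 (inf_le_left.trans le_sup_left)
    rwa [h3] at h2
  have hsz : s ((x ⊔ u) ⊓ z1) z1 := by
    have h1 : s (x ⊔ u) (x ⊔ v) := hsc.sup_congr (hsc.refl x) hsuv
    have h2 := hsc.inf_congr h1 (hsc.refl z1)
    have h3 : (x ⊔ v) ⊓ z1 = z1 := inf_eq_right.2 (inf_le_right.trans le_sup_right)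
    rwa [h3] at h2
  have heq : (x ⊔ u) ⊓ z1 = z1 := (hmeet _ _).1 ⟨hrz, hsz⟩
  have hz1P : z1 ∈ P.carrier := P.inf_mem hPxy.1 hPuv.1
  have hxuP : x ⊔ u ∈ P.carrier := by
    have hmem : (x ⊔ u) ⊓ z1 ∈ P.carrier := by rw [heq]; exact hz1P
    exact P.mem_of_le hmem inf_le_left
  rcases P.prime hxuP with h | h
  · exact hPxy.2 h
  · exact hPuv.2 h

theorem semimodal_GOf {L : LMAlg I A} {c : A → A → Prop} (hc : IsLMCongr L c) (i : I) :
    L.fA i ⁻¹' GOf c ⊆ GOf c := by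
  intro P hP
  obtain ⟨⟨p, hp⟩, hm⟩ := Set.mem_iUnion.1 hP
  have hmem : P ∈ symmDiff (sigmaA (L.phi i p.1)) (sigmaA (L.phi i p.2)) := by
    simp only [Set.mem_symmDiff] at hm ⊢
    exact hm
  exact subset_GOf (hc.phi_congr i hp) hmem

theorem GOf_union {L : LMAlg I A} {r s : A → A → Prop}
    (hrc : IsLMCongr L r) (hsc : IsLMCongr L s)
    (hjoin : ∀ t, IsLMCongr L t → (∀ x y, r x y → t x y) → (∀ x y, s x y → t x y) →
      ∀ x y, t x y) : GOf r ∪ GOf s = Set.univ := by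
  set t : A → A → Prop := Relation.ReflTransGen (fun x y => r x y ∨ s x y) with hti
  have hstep_symm : Symmetric (fun x y => r x y ∨ s x y) := by
    rintro x y (h | h)
    · exact Or.inl (hrc.symm h)
    · exact Or.inr (hsc.symm h)
  have htc : IsLMCongr L t := by
    refine ⟨fun x => Relation.ReflTransGen.refl, ?_, ?_, ?_, ?_, ?_, ?_⟩
    · intro x y h
      haveI : Std.Symm (fun x y => r x y ∨ s x y) := ⟨fun _ _ h => hstep_symm h⟩
      exact Std.Symm.symm (r := Relation.ReflTransGen (fun x y => r x y ∨ s x y)) _ _ h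
    · intro x y z h1 h2
      exact Relation.ReflTransGen.trans h1 h2
    · intro x y u v h1 h2
      have ha : t (x ⊔ u) (y ⊔ u) := by
        refine Relation.ReflTransGen.lift (fun a => a ⊔ u) ?_ _ _ h1
        rintro a b (h | h)
        · exact Or.inl (hrc.sup_congr h (hrc.refl u))
        · exact Or.inr (hsc.sup_congr h (hsc.refl u))
      have hb : t (y ⊔ u) (y ⊔ v) := by
        refine Relation.ReflTransGen.lift (fun a => y ⊔ a) ?_ _ _ h2
        rintro a b (h | h)
        · exact Or.inl (hrc.sup_congr (hrc.refl y) h)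
        · exact Or.inr (hsc.sup_congr (hsc.refl y) h)
      exact Relation.ReflTransGen.trans ha hb
    · intro x y u v h1 h2
      have ha : t (x ⊓ u) (y ⊓ u) := by
        refine Relation.ReflTransGen.lift (fun a => a ⊓ u) ?_ _ _ h1
        rintro a b (h | h)
        · exact Or.inl (hrc.inf_congr h (hrc.refl u))
        · exact Or.inr (hsc.inf_congr h (hsc.refl u))
      have hb : t (y ⊓ u) (y ⊓ v) := by
        refine Relation.ReflTransGen.lift (fun a => y ⊓ a) ?_ _ _ h2
        rintro a b (h | h)
        · exact Or.inl (hrc.inf_congr (hrc.refl y) h)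
        · exact Or.inr (hsc.inf_congr (hsc.refl y) h)
      exact Relation.ReflTransGen.trans ha hb
    · intro i x y h
      refine Relation.ReflTransGen.lift (L.phi i) ?_ _ _ h
      rintro a b (h' | h')
      · exact Or.inl (hrc.phi_congr i h')
      · exact Or.inr (hsc.phi_congr i h')
    · intro i x y h
      refine Relation.ReflTransGen.lift (L.phibar i) ?_ _ _ h
      rintro a b (h' | h')
      · exact Or.inl (hrc.phibar_congr i h')
      · exact Or.inr (hsc.phibar_congr i h')
  have htot := hjoin t htc (fun x y h => Relation.ReflTransGen.single (Or.inl h))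
    (fun x y h => Relation.ReflTransGen.single (Or.inr h))
  have hchain : ∀ x y : A, t x y →
      symmDiff (sigmaA x) (sigmaA y) ⊆ GOf r ∪ GOf s := by
    intro x y hxy
    induction hxy with
    | refl =>
      rw [symmDiff_self]
      exact bot_le
    | tail hab hbc ih =>
      rename_i b c
      intro P hP
      have h3 : P ∈ symmDiff (sigmaA x) (sigmaA b) ∪ symmDiff (sigmaA b) (sigmaA c) :=
        symmDiff_triangle (sigmaA x) (sigmaA b) (sigmaA c) hP
      rcases h3 with h | h
      · exact ih h
      · rcases hbc with h' | h'
        · exact Or.inl (subset_GOf h' h)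
        · exact Or.inr (subset_GOf h' h)
  have huniv := hchain ⊥ ⊤ (htot ⊥ ⊤)
  have hcompute : symmDiff (sigmaA (⊥ : A)) (sigmaA (⊤ : A)) =
      (Set.univ : Set (PrimeFilter A)) := by
    rw [sigmaA_bot, sigmaA_top]
    simp [Set.symmDiff_def]
  exact Set.eq_univ_of_univ_subset (hcompute ▸ huniv)

theorem GOf_spec (L : LMAlg I A) {r : A → A → Prop} (hb : IsBooleanLMCongr L r) :
    IsClosed (GOf r) ∧ IsOpen (GOf r) ∧ Modal L.fA (GOf r) := by
  obtain ⟨hrc, s, hsc, hmeet, hjoin⟩ := hb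
  have hdisj := GOf_inter_empty hrc hsc hmeet
  have huni := GOf_union hrc hsc hjoin
  have hcompl : GOf r = (GOf (A := A) s)ᶜ := by
    ext P
    constructor
    · intro h hc
      exact Set.eq_empty_iff_forall_notMem.1 hdisj P ⟨h, hc⟩
    · intro h
      have hmem : P ∈ GOf r ∪ GOf s := by rw [huni]; trivial
      exact hmem.resolve_right h
  have hmodal : Modal L.fA (GOf r) := by
    intro i
    apply Set.Subset.antisymm (semimodal_GOf hrc i)
    intro P hP
    show L.fA i P ∈ GOf r
    have hmem : L.fA i P ∈ GOf r ∪ GOf s := by rw [huni]; trivial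
    rcases hmem with h | h
    · exact h
    · exfalso
      have hPs : P ∈ GOf s := semimodal_GOf hsc i h
      exact Set.eq_empty_iff_forall_notMem.1 hdisj P ⟨hP, hPs⟩
  exact ⟨by rw [hcompl]; exact (isOpen_GOf s).isClosed_compl, isOpen_GOf r, hmodal⟩

theorem thetaO_GOf (L : LMAlg I A) {r : A → A → Prop} (hb : IsBooleanLMCongr L r) :
    thetaO (GOf r) = r := by
  classical
  have hrc := hb.1
  have hGcl := (GOf_spec L hb).1
  funext a b
  apply propext
  constructor
  · intro h
    have hK : IsClosed (symmDiff (sigmaA a) (sigmaA (A := A) b)) := by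
      rw [Set.symmDiff_def]
      exact ((isClosed_sigmaA a).inter (isOpen_sigmaA b).isClosed_compl).union
        ((isClosed_sigmaA b).inter (isOpen_sigmaA a).isClosed_compl)
    have hcov : symmDiff (sigmaA a) (sigmaA b) ⊆
        ⋃ p : {p : A × A // r p.1 p.2}, symmDiff (sigmaA p.1.1) (sigmaA p.1.2) := h
    obtain ⟨fin, hfin⟩ := hK.isCompact.elim_finite_subcover
      (fun p : {p : A × A // r p.1 p.2} => symmDiff (sigmaA p.1.1) (sigmaA p.1.2))
      (fun p => by
        show IsOpen (symmDiff (sigmaA p.1.1) (sigmaA p.1.2))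
        rw [Set.symmDiff_def, Set.diff_eq, Set.diff_eq]
        exact ((isOpen_sigmaA _).inter (isOpen_compl_sigmaA _)).union
          ((isOpen_sigmaA _).inter (isOpen_compl_sigmaA _))) hcov
    set F : Finset A := fin.image (fun p => p.1.1 ⊓ p.1.2) ∪
      fin.image (fun p => p.1.1 ⊔ p.1.2) with hF
    have hres : r (a ⊓ b) (a ⊔ b) := by
      apply chain_lemma r hrc.refl hrc.trans F (a ⊓ b) (a ⊔ b)
        (inf_le_left.trans le_sup_left)
      intro u v huv hsub hclass
      rcases Set.eq_empty_or_nonempty (sigmaA v \ sigmaA u) with hemp | ⟨P0, hP0⟩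
      · have huveq : u = v := sigmaA_injective
          (le_antisymm (sigmaA_mono huv) (Set.diff_eq_empty.1 hemp))
        exact huveq ▸ hrc.refl u
      · have hP0' : P0 ∈ symmDiff (sigmaA a) (sigmaA b) := by
          rw [sigma_symmDiff]
          exact hsub hP0
        obtain ⟨p, hpfin, hPp⟩ := Set.mem_iUnion₂.1 (hfin hP0')
        have hPp' : P0 ∈ sigmaA (p.1.1 ⊔ p.1.2) \ sigmaA (p.1.1 ⊓ p.1.2) :=
          sigma_symmDiff p.1.1 p.1.2 ▸ hPp
        have hFi : p.1.1 ⊓ p.1.2 ∈ F :=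
          Finset.mem_union_left _ (Finset.mem_image_of_mem _ hpfin)
        have hFs : p.1.1 ⊔ p.1.2 ∈ F :=
          Finset.mem_union_right _ (Finset.mem_image_of_mem _ hpfin)
        have hsub2 : sigmaA v \ sigmaA u ⊆
            sigmaA (p.1.1 ⊔ p.1.2) \ sigmaA (p.1.1 ⊓ p.1.2) := by
          intro Q hQ
          have h1 := hclass P0 Q hP0 hQ _ hFs
          have h2 := hclass P0 Q hP0 hQ _ hFi
          exact ⟨h1.1 hPp'.1, fun hc => hPp'.2 (h2.2 hc)⟩
        exact congr_of_sigma_subset hrc.refl hrc.sup_congr hrc.inf_congr huv hsub2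
          (rel_inf_sup hrc p.2)
    exact rel_of_inf_sup hrc hres
  · intro h
    exact subset_GOf h

end LM

end Stmt15Aux

/-- the Boolean lattice of closed, open and modal subsets of `X(A)` is
isomorphic, via `Θ_OM`, to the lattice of Boolean LM_θ-congruences on `A`. -/
theorem stmt15 {I A : Type*} [LinearOrder I] [DistribLattice A] [BoundedOrder A]
    (L : LMAlg I A) :
    ∃ e : {Y : Set (PrimeFilter A) // IsClosed Y ∧ IsOpen Y ∧ Modal L.fA Y} ≃o
          {r : A → A → Prop // IsBooleanLMCongr L r},
      ∀ Y, (e Y).val = fun a b => symmDiff (sigmaA a) (sigmaA b) ⊆ Y.val := by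
  classical
  refine ⟨RelIso.mk (Equiv.mk
      (fun Y => ⟨thetaO Y.1, Stmt15Aux.isBoolean_thetaO L Y.2.1 Y.2.2.1 Y.2.2.2⟩)
      (fun R => ⟨Stmt15Aux.GOf R.1, (Stmt15Aux.GOf_spec L R.2).1,
        (Stmt15Aux.GOf_spec L R.2).2.1, (Stmt15Aux.GOf_spec L R.2).2.2⟩)
      ?_ ?_) ?_, fun Y => rfl⟩
  · intro Y
    apply Subtype.ext
    show Stmt15Aux.GOf (thetaO Y.1) = Y.1
    apply Set.Subset.antisymm
    · exact Set.iUnion_subset fun p => p.2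
    · intro P hP
      obtain ⟨x, y, hPm, hsub⟩ := Stmt15Aux.exists_basic_subset Y.2.2.1 hP
      have hth : thetaO Y.1 x (x ⊓ y) := by
        show symmDiff (sigmaA _) (sigmaA _) ⊆ _
        rw [Stmt15Aux.sigma_symmDiff_inf]
        exact hsub
      refine Set.mem_iUnion.2 ⟨⟨(x, x ⊓ y), hth⟩, ?_⟩
      show P ∈ symmDiff (sigmaA x) (sigmaA (x ⊓ y))
      rw [Stmt15Aux.sigma_symmDiff_inf]
      exact hPm
  · intro R
    exact Subtype.ext (Stmt15Aux.thetaO_GOf L R.2)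
  · intro Y Y'
    constructor
    · intro h P hP
      obtain ⟨x, y, hPm, hsub⟩ := Stmt15Aux.exists_basic_subset Y.2.2.1 hP
      have hth : thetaO Y.1 x (x ⊓ y) := by
        show symmDiff (sigmaA _) (sigmaA _) ⊆ _
        rw [Stmt15Aux.sigma_symmDiff_inf]
        exact hsub
      have hth' : thetaO Y'.1 x (x ⊓ y) := h x (x ⊓ y) hth
      have : P ∈ symmDiff (sigmaA x) (sigmaA (x ⊓ y)) := by
        rw [Stmt15Aux.sigma_symmDiff_inf]
        exact hPm
      exact hth' this
    · intro h a b hab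
      exact Set.Subset.trans hab h
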